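/- Non-emptiness of l-repairs: for every finite set r with conflict relation and every acyclic priority ≺, the set of l-repairs is nonempty, i.e., the iterative construction always terminates with a valid output. -/
import Mathlib


/-- A relation is acyclic if no element is related to itself by the transitive closure. -/
def Acyclic {α : Type*} (prec : α → α → Prop) : Prop :=
  ∀ x, ¬ Relation.TransGen prec x x

/-- The global preference order on sets of tuples: `X ≪ Y`. -/
def ll {α : Type*} (prec : α → α → Prop) (X Y : Set α) : Prop :=
  ∀ x ∈ X \ Y, ∃ y ∈ Y \ X, prec x y

/-- Closed neighborhood of `x` in the conflict graph. -/
def nbhd {α : Type*} (conflict : α → α → Prop) (x : α) : Set α :=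
  {x} ∪ {y | conflict x y}

/-- The winnow operator: elements of `s` not dominated by any element of `s`. -/
def winnow {α : Type*} (prec : α → α → Prop) (s : Set α) : Set α :=
  {t ∈ s | ¬ ∃ t' ∈ s, prec t t'}

lemma winnow_nonempty {α : Type*} {prec : α → α → Prop} (hacyc : Acyclic prec)
    {s : Set α} (hs : s.Finite) (hne : s.Nonempty) : (winnow prec s).Nonempty := by
  haveI := hs.to_subtype
  let R : s → s → Prop := fun a b => Relation.TransGen prec b.1 a.1
  haveI : IsTrans s R := ⟨fun a b c hab hbc => hbc.trans hab⟩
  haveI : IsIrrefl s R := ⟨fun a h => hacyc a.1 h⟩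
  have hwf := Finite.wellFounded_of_trans_of_irrefl R
  obtain ⟨a, ha⟩ := hne
  obtain ⟨m, _, hm⟩ := hwf.has_min Set.univ ⟨⟨a, ha⟩, trivial⟩
  refine ⟨m.1, m.2, ?_⟩
  rintro ⟨t', ht', hp⟩
  exact hm ⟨t', ht'⟩ trivial (Relation.TransGen.single hp)

lemma greedy {α : Type*} (conflict prec : α → α → Prop) (hacyc : Acyclic prec) :
    ∀ (k : ℕ) (s : Set α) (hs : s.Finite), hs.toFinset.card ≤ k →
    ∃ (n : ℕ) (x : Fin n → α), Function.Injective x ∧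
      (∀ i : Fin n, x i ∈ winnow prec (s \ {y | ∃ j, j < i ∧ y ∈ nbhd conflict (x j)})) ∧
      winnow prec (s \ {y | ∃ i, y ∈ nbhd conflict (x i)}) = ∅ := by
  intro k
  induction k with
  | zero =>
    intro s hs hcard
    have : s = ∅ := by
      have := Finset.card_eq_zero.mp (Nat.le_zero.mp hcard)
      simpa [Set.Finite.toFinset_eq_empty] using this
    subst this
    exact ⟨0, Fin.elim0, fun i => i.elim0, fun i => i.elim0, by simp [winnow]⟩
  | succ k ih =>
    intro s hs hcard
    by_cases hne : s.Nonempty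
    · obtain ⟨t, hts, htw⟩ := winnow_nonempty hacyc hs hne
      set s' := s \ nbhd conflict t with hs'def
      have hs' : s'.Finite := hs.subset Set.diff_subset
      have htn : t ∈ nbhd conflict t := Or.inl rfl
      have hts' : t ∉ s' := fun h => h.2 htn
      have hcard' : hs'.toFinset.card ≤ k := by
        have hsub : hs'.toFinset ⊆ hs.toFinset := by
          intro y hy
          simp only [Set.Finite.mem_toFinset] at *
          exact hy.1
        have hne' : t ∈ hs.toFinset ∧ t ∉ hs'.toFinset := by
          simp [Set.Finite.mem_toFinset, hts, hts']
        have := Finset.card_lt_card (Finset.ssubset_iff_of_subset hsub |>.mpr ⟨t, hne'.1, hne'.2⟩)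
        omega
      obtain ⟨n, x, hinj, hcond, hfin⟩ := ih s' hs' hcard'
      have hxs' : ∀ i, x i ∈ s' := fun i => (hcond i).1.1
      refine ⟨n + 1, Fin.cons t x, ?_, ?_, ?_⟩
      · intro i j hij
        induction i using Fin.cases with
        | zero =>
          induction j using Fin.cases with
          | zero => rfl
          | succ j =>
            simp only [Fin.cons_zero, Fin.cons_succ] at hij
            exact (hts' (hij ▸ hxs' j)).elim
        | succ i =>
          induction j using Fin.cases with
          | zero =>
            simp only [Fin.cons_zero, Fin.cons_succ] at hij
            exact (hts' (hij ▸ hxs' i)).elim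
          | succ j =>
            simp only [Fin.cons_succ] at hij
            exact congrArg Fin.succ (hinj hij)
      · intro i
        induction i using Fin.cases with
        | zero =>
          have : {y | ∃ j, j < (0 : Fin (n+1)) ∧ y ∈ nbhd conflict ((Fin.cons t x : Fin (n+1) → α) j)} = ∅ := by
            ext y; simp [Fin.not_lt_zero]
          rw [Fin.cons_zero, this, Set.diff_empty]
          exact ⟨hts, htw⟩
        | succ i =>
          have hset : {y | ∃ j, j < i.succ ∧ y ∈ nbhd conflict ((Fin.cons t x : Fin (n+1) → α) j)}
              = nbhd conflict t ∪ {y | ∃ j, j < i ∧ y ∈ nbhd conflict (x j)} := by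
            ext y
            constructor
            · rintro ⟨j, hj, hy⟩
              induction j using Fin.cases with
              | zero => exact Or.inl (by simpa using hy)
              | succ j =>
                exact Or.inr ⟨j, (Fin.succ_lt_succ_iff).mp hj, by simpa using hy⟩
            · rintro (hy | ⟨j, hj, hy⟩)
              · exact ⟨0, Fin.succ_pos i, by simpa using hy⟩
              · exact ⟨j.succ, Fin.succ_lt_succ_iff.mpr hj, by simpa using hy⟩
          rw [Fin.cons_succ, hset, ← Set.diff_diff, ← hs'def]
          exact hcond i
      · have hset : {y | ∃ i, y ∈ nbhd conflict ((Fin.cons t x : Fin (n+1) → α) i)}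
            = nbhd conflict t ∪ {y | ∃ i, y ∈ nbhd conflict (x i)} := by
          ext y
          constructor
          · rintro ⟨i, hy⟩
            induction i using Fin.cases with
            | zero => exact Or.inl (by simpa using hy)
            | succ i => exact Or.inr ⟨i, by simpa using hy⟩
          · rintro (hy | ⟨i, hy⟩)
            · exact ⟨0, by simpa using hy⟩
            · exact ⟨i.succ, by simpa using hy⟩
        rw [hset, ← Set.diff_diff, ← hs'def]
        exact hfin
    · rw [Set.not_nonempty_iff_eq_empty] at hne
      subst hne
      exact ⟨0, Fin.elim0, fun i => i.elim0, fun i => i.elim0, by simp [winnow]⟩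

/-- A repair: a maximal subset of `r` containing no conflicting pair. -/
def IsRepair {α : Type*} (r : Set α) (conflict : α → α → Prop) (X : Set α) : Prop :=
  X ⊆ r ∧ (∀ a ∈ X, ∀ b ∈ X, ¬ conflict a b) ∧
    ∀ y ∈ r, y ∉ X → ∃ a ∈ X, conflict y a

/-- A locally preferred repair: obtainable by iteratively choosing an undominated
tuple and removing it together with its conflict neighborhood. -/
def IsLRepair {α : Type*} (r : Set α) (conflict prec : α → α → Prop) (X : Set α) : Prop :=
  ∃ (n : ℕ) (x : Fin n → α), Function.Injective x ∧ X = Set.range x ∧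
    (∀ i : Fin n, x i ∈ winnow prec (r \ {y | ∃ j, j < i ∧ y ∈ nbhd conflict (x j)})) ∧
    winnow prec (r \ {y | ∃ i, y ∈ nbhd conflict (x i)}) = ∅

/-- A globally preferred repair: a `≪`-maximal repair. -/
def IsGRepair {α : Type*} (r : Set α) (conflict prec : α → α → Prop) (X : Set α) : Prop :=
  IsRepair r conflict X ∧ ∀ Y, IsRepair r conflict Y → ll prec X Y → Y = X

/-- non-emptiness of l-repairs. For every finite database and
acyclic priority there exists an l-repair. -/
theorem lrepair_exists {α : Type*} (r : Set α) (hr : r.Finite)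
    (conflict prec : α → α → Prop)
    (hsymm : ∀ x y, conflict x y → conflict y x)
    (hirr : ∀ x, ¬ conflict x x)
    (hsub : ∀ x y, prec x y → conflict x y)
    (hasymm : ∀ x y, prec x y → ¬ prec y x)
    (hacyc : Acyclic prec) :
    ∃ X : Set α, IsLRepair r conflict prec X := by
  obtain ⟨n, x, hinj, hcond, hfin⟩ :=
    greedy conflict prec hacyc hr.toFinset.card r hr le_rfl
  exact ⟨Set.range x, n, x, hinj, rfl, hcond, hfin⟩
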